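/- Let (X, ρ) be a compact ultrametric space with diameter r₀ = diam X > 0, and consider the equivalence relation x ∼ y ⟺ ρ(x,y) < r₀. Then every equivalence class of ∼ is a closed ball in X whose diameter is strictly less than r₀. -/

import Mathlib

/-- In a compact ultrametric space `X` of diameter `r₀ > 0`, every equivalence class of
the relation `x ∼ y ↔ ρ(x,y) < r₀` is a closed ball of diameter strictly less than `r₀`. -/
theorem compact_ultrametric_diam_rel_classes_are_closed_balls
    (X : Type*) [MetricSpace X] [IsUltrametricDist X] [CompactSpace X]
    (h : 0 < Metric.diam (Set.univ : Set X)) :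
    ∀ x : X, ∃ (c : X) (r : ℝ),
      {y : X | dist x y < Metric.diam (Set.univ : Set X)} = Metric.closedBall c r ∧
      Metric.diam {y : X | dist x y < Metric.diam (Set.univ : Set X)}
        < Metric.diam (Set.univ : Set X) := by
  intro x
  set r₀ := Metric.diam (Set.univ : Set X) with hr₀
  set C : Set X := {y : X | dist x y < r₀} with hC
  have hCball : C = Metric.ball x r₀ := by
    ext y; simp [hC, Metric.ball, dist_comm]
  have hCclosed : IsClosed C := hCball ▸ IsUltrametricDist.isClosed_ball x r₀
  have hCcomp : IsCompact C := hCclosed.isCompact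
  have hxC : x ∈ C := by simp [hC, h]
  -- product compactness: attain the diameter
  have hprod : IsCompact (C ×ˢ C) := hCcomp.prod hCcomp
  have hne : (C ×ˢ C).Nonempty := ⟨(x, x), hxC, hxC⟩
  obtain ⟨⟨a, b⟩, ⟨haC, hbC⟩, hmax⟩ :=
    hprod.exists_isMaxOn hne (continuous_dist.comp
      (continuous_fst.prodMk continuous_snd)).continuousOn
  have hab : dist a b < r₀ :=
    lt_of_le_of_lt (IsUltrametricDist.dist_triangle_max a x b)
      (max_lt (by simpa [hC, dist_comm] using haC) hbC)
  have hdiam : Metric.diam C ≤ dist a b := by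
    apply Metric.diam_le_of_forall_dist_le (dist_nonneg)
    intro y hy z hz
    simpa using hmax (Set.mk_mem_prod hy hz)
  refine ⟨x, Metric.diam C, ?_, lt_of_le_of_lt hdiam hab⟩
  ext y
  simp only [Metric.mem_closedBall, hC, Set.mem_setOf_eq]
  constructor
  · intro hy
    exact Metric.dist_le_diam_of_mem hCcomp.isBounded (show y ∈ C from hy) hxC
  · intro hy
    rw [dist_comm]
    exact lt_of_le_of_lt hy (lt_of_le_of_lt hdiam hab)
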